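/- arXiv:1710.09071 — 3 statements merged into one kernel-verified Lean document; each statement's English description precedes it below -/
import Mathlib

section
/- (Marsden's identity) Let (t_i) be a knot sequence and B_{j,k} the B-splines of order k defined by the standard recurrence. For any α ∈ ℝ and x in the basic interval, (x - α)^{k-1} = Σ_j ψ_{j,k}(α)·B_{j,k}(x), where ψ_{j,k}(α) = (t_{j+1} - α)(t_{j+2} - α)···(t_{j+k-1} - α) and ψ_{j,1}(α) = 1. -/
/-- B-splines of order `k` for the knot sequence `t`, defined by the standard
recurrence: `Bspl t j 1` is the indicator of `[t j, t (j+1))` and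
`Bspl t j (k+1) = ω_{j,k+1}·Bspl t j k + (1 − ω_{j+1,k+1})·Bspl t (j+1) k`. -/
noncomputable def Bspl (t : ℕ → ℝ) : ℕ → ℕ → ℝ → ℝ
  | _, 0, _ => 0
  | j, 1, x => if t j ≤ x ∧ x < t (j+1) then 1 else 0
  | j, (k+2), x =>
      ((x - t j) / (t (j+k+1) - t j)) * Bspl t j (k+1) x
        + ((t (j+k+2) - x) / (t (j+k+2) - t (j+1))) * Bspl t (j+1) (k+1) x

lemma Bspl_supp (t : ℕ → ℝ) (hmono : Monotone t) :
    ∀ k j (x : ℝ), (x < t j ∨ t (j+k) ≤ x) → Bspl t j k x = 0 := by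
  intro k
  induction k with
  | zero => intro j x _; rfl
  | succ k ih =>
    cases k with
    | zero =>
      intro j x h
      show (if t j ≤ x ∧ x < t (j+1) then (1:ℝ) else 0) = 0
      rw [if_neg]
      rintro ⟨h1, h2⟩
      rcases h with h | h
      · linarith
      · exact absurd h2 (not_lt.mpr h)
    | succ k =>
      intro j x h
      show ((x - t j) / (t (j+k+1) - t j)) * Bspl t j (k+1) x
        + ((t (j+k+2) - x) / (t (j+k+2) - t (j+1))) * Bspl t (j+1) (k+1) x = 0
      have h1 : Bspl t j (k+1) x = 0 := by
        apply ih j x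
        rcases h with h | h
        · exact Or.inl h
        · exact Or.inr (le_trans (hmono (by omega)) h)
      have h2 : Bspl t (j+1) (k+1) x = 0 := by
        apply ih (j+1) x
        rcases h with h | h
        · exact Or.inl (lt_of_lt_of_le h (hmono (by omega)))
        · exact Or.inr (le_trans (le_of_eq (congrArg t (by omega))) h)
      rw [h1, h2]; ring

lemma Bspl_succ (t : ℕ → ℝ) (j k : ℕ) (hk : 1 ≤ k) (x : ℝ) :
    Bspl t j (k+1) x = ((x - t j) / (t (j+k) - t j)) * Bspl t j k x
      + ((t (j+k+1) - x) / (t (j+k+1) - t (j+1))) * Bspl t (j+1) k x := by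
  obtain ⟨m, rfl⟩ : ∃ m, k = m + 1 := ⟨k - 1, by omega⟩
  rfl

lemma Bspl_one_sum (t : ℕ → ℝ) (hmono : Monotone t) (N : ℕ) (hN : 1 ≤ N) (x : ℝ)
    (hx : t 0 ≤ x) (hx' : x < t N) :
    ∑ j ∈ Finset.range N, Bspl t j 1 x = 1 := by
  classical
  set S : Finset ℕ := (Finset.range N).filter (fun j => t j ≤ x) with hS
  have h0S : 0 ∈ S := by
    simp only [hS, Finset.mem_filter, Finset.mem_range]
    exact ⟨hN, hx⟩
  have hSne : S.Nonempty := ⟨0, h0S⟩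
  set j := S.max' hSne with hj
  have hjS : j ∈ S := S.max'_mem hSne
  have hjN : j < N := (Finset.mem_filter.mp hjS).1 |> Finset.mem_range.mp
  have hjx : t j ≤ x := (Finset.mem_filter.mp hjS).2
  have hxj : x < t (j+1) := by
    by_contra h
    push_neg at h
    have hj1N : j + 1 < N := by
      rcases Nat.lt_or_ge (j+1) N with h' | h'
      · exact h'
      · exfalso
        have : t N ≤ t (j+1) := hmono (by omega)
        linarith
    have : j + 1 ∈ S := Finset.mem_filter.mpr ⟨Finset.mem_range.mpr hj1N, h⟩
    have := S.le_max' _ this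
    omega
  rw [Finset.sum_eq_single_of_mem j (Finset.mem_range.mpr hjN)]
  · show (if t j ≤ x ∧ x < t (j+1) then (1:ℝ) else 0) = 1
    rw [if_pos ⟨hjx, hxj⟩]
  · intro i hi hij
    show (if t i ≤ x ∧ x < t (i+1) then (1:ℝ) else 0) = 0
    rw [if_neg]
    rintro ⟨h1, h2⟩
    rcases Nat.lt_or_ge i j with h' | h'
    · have : t (i+1) ≤ t j := hmono (by omega)
      linarith
    · have : t (j+1) ≤ t i := hmono (by omega)
      linarith

theorem stmt_10 (t : ℕ → ℝ) (hmono : Monotone t) (N k : ℕ) (hk : 1 ≤ k) (hkN : k ≤ N)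
    (α : ℝ) :
    ∀ x ∈ Set.Ico (t (k-1)) (t (N-k+1)),
      (x - α) ^ (k-1) =
        ∑ j ∈ Finset.range (N - k + 1),
          (∏ i ∈ Finset.range (k-1), (t (j+1+i) - α)) * Bspl t j k x := by
  revert hkN
  induction k, hk using Nat.le_induction with
  | base =>
    intro hN x hx
    have e : N - 1 + 1 = N := by omega
    rw [e] at hx
    simp only [Nat.sub_self, pow_zero, Finset.range_zero, Finset.prod_empty, one_mul, e]
    exact (Bspl_one_sum t hmono N hN x hx.1 hx.2).symm
  | succ k hk ih =>
    intro hN x hx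
    have e1 : N - (k+1) + 1 = N - k := by omega
    have e2 : (k+1) - 1 = k := by omega
    rw [e1, e2] at hx ⊢
    obtain ⟨m, hm⟩ : ∃ m, N - k = m + 1 := ⟨N - k - 1, by omega⟩
    have hxk : t k ≤ x := hx.1
    have hxM : x < t (N - k) := hx.2
    -- the two halves of each term after unfolding the recurrence
    set G : ℕ → ℝ := fun j =>
      ((∏ i ∈ Finset.range (k-1), (t (j+1+i) - α)) * (t (j+k) - α))
        * ((x - t j) / (t (j+k) - t j)) * Bspl t j k x with hG
    set H : ℕ → ℝ := fun j =>
      ((t j - α) * (∏ i ∈ Finset.range (k-1), (t (j+1+i) - α)))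
        * ((t (j+k) - x) / (t (j+k) - t j)) * Bspl t j k x with hH
    have prod_split : ∀ j : ℕ,
        (∏ i ∈ Finset.range k, (t (j+1+i) - α)) =
          (∏ i ∈ Finset.range (k-1), (t (j+1+i) - α)) * (t (j+k) - α) := by
      intro j
      obtain ⟨p, rfl⟩ : ∃ p, k = p + 1 := ⟨k - 1, by omega⟩
      simp only [Nat.add_sub_cancel]
      rw [Finset.prod_range_succ]
      have : j + 1 + p = j + (p + 1) := by omega
      rw [this]
    have prod_split' : ∀ j : ℕ,
        (∏ i ∈ Finset.range k, (t (j+i) - α)) =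
          (t j - α) * (∏ i ∈ Finset.range (k-1), (t (j+1+i) - α)) := by
      intro j
      obtain ⟨p, rfl⟩ : ∃ p, k = p + 1 := ⟨k - 1, by omega⟩
      simp only [Nat.add_sub_cancel]
      rw [Finset.prod_range_succ']
      have e0 : ∏ i ∈ Finset.range p, (t (j+(i+1)) - α)
          = ∏ i ∈ Finset.range p, (t (j+1+i) - α) :=
        Finset.prod_congr rfl fun i _ => by
          have : j + (i + 1) = j + 1 + i := by omega
          rw [this]
      rw [e0]
      exact mul_comm _ _
    have expand : ∀ j : ℕ,
        (∏ i ∈ Finset.range k, (t (j+1+i) - α)) * Bspl t j (k+1) x = G j + H (j+1) := by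
      intro j
      have eH : (∏ i ∈ Finset.range k, (t (j+1+i) - α)) =
          (t (j+1) - α) * (∏ i ∈ Finset.range (k-1), (t (j+1+1+i) - α)) := prod_split' (j+1)
      have et : t (j+k+1) = t (j+1+k) := congrArg t (by omega)
      rw [Bspl_succ t j k hk x, mul_add]
      congr 1
      · rw [hG]; simp only []
        rw [prod_split j]; ring
      · rw [hH]; simp only []
        rw [eH, et]; ring
    have Gend : G (m+1) = 0 := by
      rw [hG]
      simp only []
      rw [Bspl_supp t hmono k (m+1) x (Or.inl (by rw [← hm]; exact hxM))]
      ring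
    have H0 : H 0 = 0 := by
      rw [hH]
      simp only []
      rw [Bspl_supp t hmono k 0 x (Or.inr (by rw [Nat.zero_add]; exact hxk))]
      ring
    have key : ∀ j : ℕ, G j + H j =
        (x - α) * ((∏ i ∈ Finset.range (k-1), (t (j+1+i) - α)) * Bspl t j k x) := by
      intro j
      rcases eq_or_lt_of_le (hmono (show j ≤ j + k by omega)) with hab | hab
      · have hB : Bspl t j k x = 0 := by
          apply Bspl_supp t hmono k j x
          rcases le_or_gt (t j) x with h | h
          · exact Or.inr (hab ▸ h)
          · exact Or.inl h
        rw [hG, hH]; simp only []; rw [hB]; ring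
      · have hne : t (j+k) - t j ≠ 0 := by linarith
        rw [hG, hH]
        simp only []
        field_simp
        ring
    have eG : ∑ j ∈ Finset.range (m+1+1), G j
        = (∑ j ∈ Finset.range (m+1), G j) + G (m+1) := Finset.sum_range_succ G (m+1)
    have eHs : ∑ j ∈ Finset.range (m+1+1), H j
        = (∑ j ∈ Finset.range (m+1), H (j+1)) + H 0 := Finset.sum_range_succ' H (m+1)
    calc (x - α) ^ k
        = (x - α) * (x - α) ^ (k-1) := by
          rw [← pow_succ']
          congr 1
          omega
      _ = (x - α) * ∑ j ∈ Finset.range (N-k+1),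
            (∏ i ∈ Finset.range (k-1), (t (j+1+i) - α)) * Bspl t j k x := by
          rw [← ih (by omega) x ⟨le_trans (hmono (by omega)) hxk,
            lt_of_lt_of_le hxM (hmono (by omega))⟩]
      _ = ∑ j ∈ Finset.range (m+1+1), (G j + H j) := by
          rw [Finset.mul_sum, hm]
          exact Finset.sum_congr rfl fun j _ => (key j).symm
      _ = (∑ j ∈ Finset.range (m+1), G j) + (∑ j ∈ Finset.range (m+1), H (j+1)) := by
          rw [Finset.sum_add_distrib, eG, eHs, Gend, H0]
          ring
      _ = ∑ j ∈ Finset.range (m+1), ((∏ i ∈ Finset.range k, (t (j+1+i) - α)) * Bspl t j (k+1) x) := by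
          rw [← Finset.sum_add_distrib]
          exact Finset.sum_congr rfl fun j _ => (expand j).symm
      _ = ∑ j ∈ Finset.range (N-k), (∏ i ∈ Finset.range k, (t (j+1+i) - α)) * Bspl t j (k+1) x := by
          rw [hm]
end

section
/- (Derivative of a B-spline) For B-splines of order k > 1 with strictly increasing knots t_j < ... < t_{j+k}, on the open interval (t_j, t_{j+k}) one has (d/dθ)B_{j,k}(θ) = (k-1)·( B_{j,k-1}(θ)/(t_{j+k-1} - t_j) − B_{j+1,k-1}(θ)/(t_{j+k} - t_{j+1}) ), at every point θ where both lower-order B-splines are differentiable. -/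
lemma Bspl_rec (t : ℕ → ℝ) (j k : ℕ) (x : ℝ) : Bspl t j (k+2) x =
      ((x - t j) / (t (j+k+1) - t j)) * Bspl t j (k+1) x
        + ((t (j+k+2) - x) / (t (j+k+2) - t (j+1))) * Bspl t (j+1) (k+1) x := by
  simp [Bspl]

lemma knot_mono (t : ℕ → ℝ) (a b : ℕ) (h : ∀ i, a ≤ i → i < b → t i < t (i+1)) :
    ∀ p q, a ≤ p → p < q → q ≤ b → t p < t q := by
  intro p q
  induction q with
  | zero => omega
  | succ n ih =>
    intro hap hpq hqb
    rcases Nat.lt_succ_iff_lt_or_eq.mp hpq with h' | h'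
    · exact (ih hap h' (by omega)).trans (h n (by omega) (by omega))
    · subst h'; exact h p hap (by omega)

lemma Bspl_deriv_offknot (t : ℕ → ℝ) :
    ∀ (k j : ℕ) (θ : ℝ),
      (∀ i, j ≤ i → i < j + k → t i < t (i+1)) →
      (∀ i, j ≤ i → i ≤ j + k → θ ≠ t i) →
      HasDerivAt (fun x => Bspl t j k x)
        (((k : ℝ) - 1) * (Bspl t j (k-1) θ / (t (j+k-1) - t j)
          - Bspl t (j+1) (k-1) θ / (t (j+k) - t (j+1)))) θ := by
  intro k
  induction k with
  | zero =>
    intro j θ _ _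
    simpa [Bspl] using hasDerivAt_const θ (0:ℝ)
  | succ k ih =>
    intro j θ hs hne
    cases k with
    | zero =>
      -- order 1 : indicator function, locally constant off the knots
      have hθj : θ ≠ t j := hne j le_rfl (by omega)
      have hθj1 : θ ≠ t (j+1) := hne (j+1) (by omega) (by omega)
      have hval : HasDerivAt (fun x => Bspl t j 1 x) 0 θ := by
        have heq : (fun x => Bspl t j 1 x) =ᶠ[nhds θ]
            (fun _ => Bspl t j 1 θ) := by
          rcases lt_or_gt_of_ne hθj with h1 | h1
          · filter_upwards [eventually_lt_nhds h1] with x hx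
            have hx' : ¬ (t j ≤ x ∧ x < t (j+1)) := by
              intro h; linarith [h.1]
            have hθ' : ¬ (t j ≤ θ ∧ θ < t (j+1)) := by
              intro h; linarith [h.1]
            simp [Bspl, hx', hθ']
          · rcases lt_or_gt_of_ne hθj1 with h2 | h2
            · filter_upwards [eventually_gt_nhds h1, eventually_lt_nhds h2] with x hx1 hx2
              simp [Bspl, le_of_lt hx1, hx2, le_of_lt h1, h2]
            · filter_upwards [eventually_gt_nhds h2] with x hx
              have hx' : ¬ (t j ≤ x ∧ x < t (j+1)) := by
                intro h; linarith [h.2]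
              have hθ' : ¬ (t j ≤ θ ∧ θ < t (j+1)) := by
                intro h; linarith [h.2]
              simp [Bspl, hx', hθ']
        exact (hasDerivAt_const θ _).congr_of_eventuallyEq heq
      convert hval using 1
      norm_num
    | succ m =>
      -- order m+2
      have H1 := ih j θ (fun i h1 h2 => hs i h1 (by omega))
        (fun i h1 h2 => hne i h1 (by omega))
      have H2 := ih (j+1) θ (fun i h1 h2 => hs i (by omega) (by omega))
        (fun i h1 h2 => hne i (by omega) (by omega))
      simp only [show m + 1 - 1 = m from rfl, show j + (m+1) - 1 = j + m by omega,
        show j + 1 + (m+1) - 1 = j + 1 + m by omega] at H1 H2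
      have h11 : HasDerivAt (fun x : ℝ => (x - t j) / (t (j+m+1) - t j))
          (1 / (t (j+m+1) - t j)) θ :=
        ((hasDerivAt_id θ).sub_const (t j)).div_const _
      have h21 : HasDerivAt (fun x : ℝ => (t (j+m+2) - x) / (t (j+m+2) - t (j+1)))
          ((-1) / (t (j+m+2) - t (j+1))) θ :=
        (((hasDerivAt_id θ).const_sub (t (j+m+2)))).div_const _
      have total := (h11.mul H1).add (h21.mul H2)
      have hfun : (fun x => Bspl t j (m+2) x) =ᶠ[nhds θ]
          (fun x => (x - t j) / (t (j+m+1) - t j) * Bspl t j (m+1) x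
            + (t (j+m+2) - x) / (t (j+m+2) - t (j+1)) * Bspl t (j+1) (m+1) x) :=
        Filter.Eventually.of_forall (fun x => Bspl_rec t j m x)
      have total' := total.congr_of_eventuallyEq hfun
      refine total'.congr_deriv ?_
      -- now prove the value identity
      have d10 : t j < t (j+m+1) := knot_mono t j (j+(m+2))
        (fun i h1 h2 => hs i h1 (by omega)) j (j+m+1) le_rfl (by omega) (by omega)
      have d20 : t (j+1) < t (j+m+2) := knot_mono t j (j+(m+2))
        (fun i h1 h2 => hs i h1 (by omega)) (j+1) (j+m+2) (by omega) (by omega) (by omega)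
      have hd1 : t (j+m+1) - t j ≠ 0 := by linarith
      have hd2 : t (j+m+2) - t (j+1) ≠ 0 := by linarith
      simp only [show m + 2 - 1 = m + 1 from rfl, show j + (m+2) - 1 = j + m + 1 by omega,
        show j + (m+2) = j + m + 2 by omega, show j + (m+1) = j + m + 1 by omega,
        show j + 1 + (m+1) = j + m + 2 by omega, show j + 1 + m = j + m + 1 by omega]
      cases m with
      | zero =>
        push_cast
        ring
      | succ n =>
        -- expand the order-(n+2) B-splines via the recurrence
        rw [show n + 1 + 1 = n + 2 from rfl, Bspl_rec t j n θ, Bspl_rec t (j+1) n θ]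
        have e1 : t j < t (j+n+1) := knot_mono t j (j+(n+3))
          (fun i h1 h2 => hs i h1 (by omega)) j (j+n+1) le_rfl (by omega) (by omega)
        have e2 : t (j+1) < t (j+n+2) := knot_mono t j (j+(n+3))
          (fun i h1 h2 => hs i h1 (by omega)) (j+1) (j+n+2) (by omega) (by omega) (by omega)
        have e3 : t (j+2) < t (j+n+3) := knot_mono t j (j+(n+3))
          (fun i h1 h2 => hs i h1 (by omega)) (j+2) (j+n+3) (by omega) (by omega) (by omega)
        have he1 : t (j+n+1) - t j ≠ 0 := by linarith
        have he2 : t (j+n+2) - t (j+1) ≠ 0 := by linarith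
        have he3 : t (j+n+3) - t (j+2) ≠ 0 := by linarith
        simp only [show j + 1 + n = j + n + 1 by omega, show j + 1 + (n+1) = j + n + 2 by omega,
          show j + 1 + (n+2) = j + n + 3 by omega, show j + 1 + 1 = j + 2 by omega,
          show j + (n+1) = j + n + 1 by omega, show j + (n+2) = j + n + 2 by omega] at *
        push_cast
        field_simp
        ring

theorem stmt_12 (t : ℕ → ℝ) (j k : ℕ) (hk : 2 ≤ k)
    (hstrict : ∀ i, j ≤ i → i < j + k → t i < t (i+1))
    (θ : ℝ) (hθ : θ ∈ Set.Ioo (t j) (t (j+k)))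
    (d1 d2 : ℝ)
    (hd1 : HasDerivAt (fun x => Bspl t j (k-1) x) d1 θ)
    (hd2 : HasDerivAt (fun x => Bspl t (j+1) (k-1) x) d2 θ) :
    HasDerivAt (fun x => Bspl t j k x)
      ((k - 1 : ℝ) * (Bspl t j (k-1) θ / (t (j+k-1) - t j)
        - Bspl t (j+1) (k-1) θ / (t (j+k) - t (j+1)))) θ := by
  obtain ⟨m, rfl⟩ : ∃ m, k = m + 2 := ⟨k - 2, by omega⟩
  simp only [show m + 2 - 1 = m + 1 from rfl, show j + (m+2) - 1 = j + m + 1 by omega,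
    show j + (m+2) = j + m + 2 by omega] at hd1 hd2 hθ ⊢
  set f : ℝ → ℝ := fun x => Bspl t j (m+2) x with hf
  set g : ℝ → ℝ := fun x => (((m+2 : ℕ) : ℝ) - 1) *
    (Bspl t j (m+1) x / (t (j+m+1) - t j) - Bspl t (j+1) (m+1) x / (t (j+m+2) - t (j+1))) with hg
  show HasDerivAt f (g θ) θ
  -- continuity of f and g at θ
  have c1 : ContinuousAt (fun x => Bspl t j (m+1) x) θ := hd1.continuousAt
  have c2 : ContinuousAt (fun x => Bspl t (j+1) (m+1) x) θ := hd2.continuousAt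
  have cf : ContinuousAt f θ := by
    have : ContinuousAt (fun x => (x - t j) / (t (j+m+1) - t j) * Bspl t j (m+1) x
        + (t (j+m+2) - x) / (t (j+m+2) - t (j+1)) * Bspl t (j+1) (m+1) x) θ := by
      exact (((continuousAt_id.sub continuousAt_const).div_const _).mul c1).add
        (((continuousAt_const.sub continuousAt_id).div_const _).mul c2)
    refine this.congr ?_
    filter_upwards with x
    exact (Bspl_rec t j m x).symm
  have cg : ContinuousAt g θ := by
    exact ((c1.div_const _).sub (c2.div_const _)).const_mul _
  -- eventually (in punctured sense) away from all knots
  have knotfree : ∀ (lset : Set ℝ), (lset = Set.Ioi θ ∨ lset = Set.Iio θ) →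
      ∀ᶠ x in nhdsWithin θ lset, ∀ i ∈ Finset.Icc j (j+m+2), x ≠ t i := by
    intro lset hlset
    rw [Filter.eventually_all_finset]
    intro i _
    by_cases h : t i = θ
    · rw [h]
      filter_upwards [self_mem_nhdsWithin] with x hx
      rcases hlset with rfl | rfl
      · exact ne_of_gt hx
      · exact ne_of_lt hx
    · exact (eventually_ne_nhds (Ne.symm h)).filter_mono nhdsWithin_le_nhds
  have key : ∀ (lset : Set ℝ), (lset = Set.Ioi θ ∨ lset = Set.Iio θ) →
      ∃ s ∈ nhdsWithin θ lset, ∀ x ∈ s, HasDerivAt f (g x) x := by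
    intro lset hlset
    refine ⟨{x | ∀ i ∈ Finset.Icc j (j+m+2), x ≠ t i}, knotfree lset hlset, ?_⟩
    intro x hx
    have hne : ∀ i, j ≤ i → i ≤ j + (m+2) → x ≠ t i := by
      intro i h1 h2
      exact hx i (Finset.mem_Icc.mpr ⟨h1, by omega⟩)
    have := Bspl_deriv_offknot t (m+2) j x hstrict hne
    simp only [show m + 2 - 1 = m + 1 from rfl, show j + (m+2) - 1 = j + m + 1 by omega,
      show j + (m+2) = j + m + 2 by omega] at this
    exact this
  -- right derivative
  have right : HasDerivWithinAt f (g θ) (Set.Ici θ) θ := by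
    obtain ⟨s, hsmem, hs⟩ := key (Set.Ioi θ) (Or.inl rfl)
    refine hasDerivWithinAt_Ici_of_tendsto_deriv
      (fun x hx => (hs x hx).differentiableAt.differentiableWithinAt)
      cf.continuousWithinAt hsmem ?_
    have hcongr : (fun x => deriv f x) =ᶠ[nhdsWithin θ (Set.Ioi θ)] g := by
      filter_upwards [hsmem] with x hx
      exact (hs x hx).deriv
    exact (cg.tendsto.mono_left nhdsWithin_le_nhds).congr' hcongr.symm
  have left : HasDerivWithinAt f (g θ) (Set.Iic θ) θ := by
    obtain ⟨s, hsmem, hs⟩ := key (Set.Iio θ) (Or.inr rfl)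
    refine hasDerivWithinAt_Iic_of_tendsto_deriv
      (fun x hx => (hs x hx).differentiableAt.differentiableWithinAt)
      cf.continuousWithinAt hsmem ?_
    have hcongr : (fun x => deriv f x) =ᶠ[nhdsWithin θ (Set.Iio θ)] g := by
      filter_upwards [hsmem] with x hx
      exact (hs x hx).deriv
    exact (cg.tendsto.mono_left nhdsWithin_le_nhds).congr' hcongr.symm
  simpa using left.union right
end

section
/- Let l ≥ 1, Δx > 0, and x_i = x_0 + iΔx for i = 0,...,l. Then for any x ∈ [x_0, x_l], ∏_{i=0}^{l} |x − x_i| ≤ (Δx)^{l+1} · l! / 4. -/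
lemma prod_shift2 (n : ℕ) : ∏ k ∈ Finset.range n, (k + 2) = (n+1).factorial := by
  induction n with
  | zero => simp
  | succ n ih =>
    rw [Finset.prod_range_succ, ih, Nat.factorial_succ (n+1)]
    ring

lemma fact_mul_fact_le (a b : ℕ) (ha : 1 ≤ a) (hb : 1 ≤ b) :
    a.factorial * b.factorial ≤ (a + b - 1).factorial := by
  induction b with
  | zero => omega
  | succ b ih =>
    rcases Nat.eq_zero_or_pos b with rfl | hb'
    · simpa using Nat.factorial_le (show a ≤ a + 1 - 1 + 0 by omega)
    · have h := ih hb'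
      have he : a + (b+1) - 1 = (a + b - 1) + 1 := by omega
      rw [he, Nat.factorial_succ, Nat.factorial_succ]
      calc a.factorial * ((b+1) * b.factorial)
          = (b+1) * (a.factorial * b.factorial) := by ring
        _ ≤ (b+1) * (a + b - 1).factorial := Nat.mul_le_mul_left _ h
        _ ≤ (a + b - 1 + 1) * (a + b - 1).factorial :=
            Nat.mul_le_mul_right _ (by omega)

lemma core (l : ℕ) (hl : 1 ≤ l) (t : ℝ) (ht0 : 0 ≤ t) (htl : t ≤ l) :
    (∏ i ∈ Finset.range (l+1), |t - i|) ≤ (Nat.factorial l : ℝ) / 4 := by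
  set j : ℕ := min (⌊t⌋.toNat) (l-1) with hj
  have hfl0 : (0:ℤ) ≤ ⌊t⌋ := Int.le_floor.2 (by exact_mod_cast ht0)
  have hjl : j + 1 ≤ l := by omega
  have hjt : (j : ℝ) ≤ t := by
    have h1 : ((⌊t⌋.toNat : ℤ) : ℝ) ≤ t := by
      rw [Int.toNat_of_nonneg hfl0]; exact Int.floor_le t
    have : (j : ℕ) ≤ ⌊t⌋.toNat := min_le_left _ _
    calc (j:ℝ) ≤ (⌊t⌋.toNat : ℝ) := by exact_mod_cast this
      _ = ((⌊t⌋.toNat : ℤ) : ℝ) := by push_cast; ring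
      _ ≤ t := h1
  have htj : t ≤ (j : ℝ) + 1 := by
    rcases le_or_gt (⌊t⌋.toNat) (l-1) with h | h
    · have hjeq : j = ⌊t⌋.toNat := by omega
      have := Int.lt_floor_add_one t
      rw [hjeq]
      have : t < ((⌊t⌋.toNat : ℤ) : ℝ) + 1 := by
        rw [Int.toNat_of_nonneg hfl0]; exact Int.lt_floor_add_one t
      have h2 : ((⌊t⌋.toNat : ℤ) : ℝ) = ((⌊t⌋.toNat : ℕ) : ℝ) := by push_cast; ring
      linarith [this, h2.le]
    · have hjeq : j = l - 1 := by omega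
      have : (j : ℝ) + 1 = l := by
        rw [hjeq]; push_cast [Nat.cast_sub hl]; ring
      linarith
  -- split the product
  have hsplit : (∏ i ∈ Finset.range (l+1), |t - i|) =
      (∏ i ∈ Finset.range j, |t - i|) * (|t - j| * |t - (j+1 : ℕ)|) *
      (∏ i ∈ Finset.Ico (j+2) (l+1), |t - i|) := by
    rw [Finset.range_eq_Ico, Finset.range_eq_Ico]
    rw [← Finset.prod_Ico_consecutive (fun i => |t - (i:ℝ)|)
        (Nat.zero_le j) (by omega : j ≤ l+1)]
    rw [← Finset.prod_Ico_consecutive (fun i => |t - (i:ℝ)|)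
        (by omega : j ≤ j+2) (by omega : j+2 ≤ l+1)]
    rw [Finset.prod_Ico_succ_top (by omega : j ≤ j+1)]
    rw [show Finset.Ico j (j+1) = {j} by rw [Finset.Ico_add_one_right_eq_Icc, Finset.Icc_self]]
    rw [Finset.prod_singleton]; ring
  rw [hsplit]
  -- bound A
  have hA : (∏ i ∈ Finset.range j, |t - i|) ≤
      (∏ i ∈ Finset.range j, ((j + 1 - i : ℕ) : ℝ)) := by
    apply Finset.prod_le_prod (fun i _ => abs_nonneg _)
    intro i hi
    rw [Finset.mem_range] at hi
    have h1 : (i : ℝ) ≤ (j : ℝ) := by exact_mod_cast hi.le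
    rw [abs_of_nonneg (by linarith)]
    have : ((j + 1 - i : ℕ) : ℝ) = (j : ℝ) + 1 - i := by
      push_cast [Nat.cast_sub (by omega : i ≤ j + 1)]; ring
    rw [this]; linarith
  -- bound B
  have hB : |t - j| * |t - (j+1 : ℕ)| ≤ 1/4 := by
    have h1 : |t - (j:ℝ)| = t - j := abs_of_nonneg (by linarith)
    have h2 : |t - ((j+1 : ℕ):ℝ)| = (j:ℝ) + 1 - t := by
      rw [abs_of_nonpos (by push_cast; linarith)]; push_cast; ring
    rw [h1, h2]
    nlinarith [sq_nonneg (t - j - 1/2)]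
  -- bound C
  have hC : (∏ i ∈ Finset.Ico (j+2) (l+1), |t - i|) ≤
      (∏ i ∈ Finset.Ico (j+2) (l+1), ((i - j : ℕ) : ℝ)) := by
    apply Finset.prod_le_prod (fun i _ => abs_nonneg _)
    intro i hi
    rw [Finset.mem_Ico] at hi
    have h1 : (j : ℝ) + 2 ≤ (i : ℝ) := by exact_mod_cast hi.1
    rw [abs_of_nonpos (by linarith)]
    have : ((i - j : ℕ) : ℝ) = (i : ℝ) - j := by
      push_cast [Nat.cast_sub (by omega : j ≤ i)]; ring
    rw [this]; linarith
  -- compute the nat products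
  have hP1 : (∏ i ∈ Finset.range j, (j + 1 - i)) = (j+1).factorial := by
    rw [← Finset.prod_range_reflect (fun i => j + 1 - i) j]
    calc (∏ i ∈ Finset.range j, (j + 1 - (j - 1 - i)))
        = ∏ i ∈ Finset.range j, (i + 2) := by
          apply Finset.prod_congr rfl
          intro i hi
          rw [Finset.mem_range] at hi
          omega
      _ = (j+1).factorial := prod_shift2 j
  have hP2 : (∏ i ∈ Finset.Ico (j+2) (l+1), (i - j)) = (l - j).factorial := by
    rw [Finset.prod_Ico_eq_prod_range]
    have he : l + 1 - (j + 2) = l - j - 1 := by omega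
    rw [he]
    calc (∏ i ∈ Finset.range (l - j - 1), (j + 2 + i - j))
        = ∏ i ∈ Finset.range (l - j - 1), (i + 2) := by
          apply Finset.prod_congr rfl
          intro i hi
          omega
      _ = (l - j - 1 + 1).factorial := prod_shift2 _
      _ = (l - j).factorial := by congr 1; omega
  have hfact : (j+1).factorial * (l - j).factorial ≤ l.factorial :=
    le_trans (fact_mul_fact_le (j+1) (l-j) (by omega) (by omega))
      (Nat.factorial_le (by omega))
  -- combine
  have hAnn : (0:ℝ) ≤ ∏ i ∈ Finset.range j, |t - i| :=
    Finset.prod_nonneg (fun i _ => abs_nonneg _)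
  have hCnn : (0:ℝ) ≤ ∏ i ∈ Finset.Ico (j+2) (l+1), |t - i| :=
    Finset.prod_nonneg (fun i _ => abs_nonneg _)
  have hBnn : (0:ℝ) ≤ |t - j| * |t - (j+1 : ℕ)| :=
    mul_nonneg (abs_nonneg _) (abs_nonneg _)
  have hA' : (∏ i ∈ Finset.range j, ((j + 1 - i : ℕ) : ℝ)) = ((j+1).factorial : ℝ) := by
    rw [← hP1]; push_cast [Finset.prod_natCast]; rfl
  have hC' : (∏ i ∈ Finset.Ico (j+2) (l+1), ((i - j : ℕ) : ℝ)) = (((l-j)).factorial : ℝ) := by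
    rw [← hP2]; push_cast [Finset.prod_natCast]; rfl
  have hA2 := hA.trans_eq hA'
  have hC2 := hC.trans_eq hC'
  have hfactR : ((j+1).factorial : ℝ) * ((l-j).factorial : ℝ) ≤ (l.factorial : ℝ) := by
    exact_mod_cast hfact
  have hApos : (0:ℝ) ≤ ((j+1).factorial : ℝ) := by positivity
  have hCpos : (0:ℝ) ≤ ((l-j).factorial : ℝ) := by positivity
  calc (∏ i ∈ Finset.range j, |t - i|) * (|t - j| * |t - (j+1 : ℕ)|) *
      (∏ i ∈ Finset.Ico (j+2) (l+1), |t - i|)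
      ≤ ((j+1).factorial : ℝ) * (1/4) * ((l-j).factorial : ℝ) := by
        apply mul_le_mul (mul_le_mul hA2 hB hBnn hApos) hC2 hCnn
        positivity
    _ = ((j+1).factorial : ℝ) * ((l-j).factorial : ℝ) / 4 := by ring
    _ ≤ (l.factorial : ℝ) / 4 := by linarith

theorem stmt_15 (l : ℕ) (hl : 1 ≤ l) (Δx : ℝ) (hΔx : 0 < Δx) (x0 : ℝ)
    (x : ℝ) (hx : x ∈ Set.Icc x0 (x0 + l * Δx)) :
    (∏ i ∈ Finset.range (l+1), |x - (x0 + i * Δx)|) ≤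
      Δx ^ (l+1) * (Nat.factorial l : ℝ) / 4 := by
  obtain ⟨hx1, hx2⟩ := hx
  set t : ℝ := (x - x0) / Δx with ht
  have ht0 : 0 ≤ t := div_nonneg (by linarith) hΔx.le
  have htl : t ≤ l := by
    rw [ht, div_le_iff₀ hΔx]; linarith
  have hxe : ∀ i : ℕ, |x - (x0 + i * Δx)| = Δx * |t - i| := by
    intro i
    have : x - (x0 + i * Δx) = Δx * (t - i) := by
      rw [ht]; field_simp; ring
    rw [this, abs_mul, abs_of_pos hΔx]
  calc (∏ i ∈ Finset.range (l+1), |x - (x0 + i * Δx)|)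
      = ∏ i ∈ Finset.range (l+1), (Δx * |t - i|) := by
        exact Finset.prod_congr rfl (fun i _ => hxe i)
    _ = Δx ^ (l+1) * ∏ i ∈ Finset.range (l+1), |t - i| := by
        rw [Finset.prod_mul_distrib, Finset.prod_const, Finset.card_range]
    _ ≤ Δx ^ (l+1) * ((Nat.factorial l : ℝ) / 4) := by
        apply mul_le_mul_of_nonneg_left (core l hl t ht0 htl) (by positivity)
    _ = Δx ^ (l+1) * (Nat.factorial l : ℝ) / 4 := by ring
end
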